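/- Let Λ = ℤ^n (n ≥ 1) and let 𝓛 ∈ 𝒢'(Λ) be integrable of type N, normalized so that l takes exactly the integer values −N, …, N. Then either N = 1, or N = 2 and Σ₂ ≠ ∅. -/

import Mathlib

namespace LieOnLattice

variable {n : ℕ} {L : Type*} [LieRing L] [LieAlgebra ℂ L]

/-- A `ℤ^n`-graded Lie algebra structure on `L`. -/
structure GradedLie (n : ℕ) (L : Type*) [LieRing L] [LieAlgebra ℂ L] where
  G : (Fin n → ℤ) → Submodule ℂ L
  internal : DirectSum.IsInternal G
  bracket_mem : ∀ (lam mu : Fin n → ℤ) (x y : L),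
    x ∈ G lam → y ∈ G mu → ⁅x, y⁆ ∈ G (lam + mu)

def GradedLie.IsGradedIdeal (D : GradedLie n L) (I : LieIdeal ℂ L) : Prop :=
  (I : Submodule ℂ L) = ⨆ lam, (I : Submodule ℂ L) ⊓ D.G lam

def GradedLie.SimpleGraded (D : GradedLie n L) : Prop :=
  (∃ x y : L, ⁅x, y⁆ ≠ 0) ∧ ∀ I : LieIdeal ℂ L, D.IsGradedIdeal I → I = ⊥ ∨ I = ⊤

/-- The support of the gradation. -/
def GradedLie.Supp (D : GradedLie n L) : Set (Fin n → ℤ) := {lam | D.G lam ≠ ⊥}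

/-- The class 𝒢': simple graded, homogeneous components of dimension at most one,
`dim 𝓛₀ = 1`, and the support generates the lattice. -/
def GradedLie.InClassG' (D : GradedLie n L) : Prop :=
  D.SimpleGraded ∧ (∀ lam, Module.rank ℂ (D.G lam) ≤ 1) ∧
    Module.finrank ℂ (D.G 0) = 1 ∧ AddSubgroup.closure D.Supp = ⊤

/-- The set Π of `α` with `±α` in the support and `⁅𝓛_α, 𝓛_{-α}⁆ ≠ 0`. -/
def GradedLie.PiSet (D : GradedLie n L) : Set (Fin n → ℤ) :=
  {α | α ∈ D.Supp ∧ -α ∈ D.Supp ∧ ∃ x ∈ D.G α, ∃ y ∈ D.G (-α), ⁅x, y⁆ ≠ 0}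

/-- The set Σ = {α ∈ Π : l(α) ≠ 0}. -/
def GradedLie.SigmaSet (D : GradedLie n L) (l : (Fin n → ℤ) → ℂ) : Set (Fin n → ℤ) :=
  {α | α ∈ D.PiSet ∧ l α ≠ 0}

set_option linter.unusedSectionVars false

/-! ### Auxiliary machinery -/

section Chains

variable (D : GradedLie n L)

/-- Value of an iterated (left-normed) bracket chain. -/
def cval (x : L) (s : List ((Fin n → ℤ) × L)) : L :=
  s.foldl (fun w p => ⁅p.2, w⁆) x

/-- Total degree of a chain of steps. -/
def csum (s : List ((Fin n → ℤ) × L)) : Fin n → ℤ := (s.map Prod.fst).sum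

/-- All steps of the chain are homogeneous of the recorded degree. -/
def cgood (s : List ((Fin n → ℤ) × L)) : Prop := ∀ p ∈ s, p.2 ∈ D.G p.1

variable {D}

@[simp] lemma cval_nil (x : L) : cval x ([] : List ((Fin n → ℤ) × L)) = x := rfl

@[simp] lemma cval_cons (x : L) (p : (Fin n → ℤ) × L) (s : List ((Fin n → ℤ) × L)) :
    cval x (p :: s) = cval ⁅p.2, x⁆ s := rfl

lemma cval_append (x : L) (s t : List ((Fin n → ℤ) × L)) :
    cval x (s ++ t) = cval (cval x s) t := List.foldl_append ..

@[simp] lemma cval_zero (s : List ((Fin n → ℤ) × L)) : cval (0 : L) s = 0 := by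
  induction s with
  | nil => rfl
  | cons p s ih => simp [cval_cons, ih]

lemma cval_sub (x y : L) (s : List ((Fin n → ℤ) × L)) :
    cval (x - y) s = cval x s - cval y s := by
  induction s generalizing x y with
  | nil => rfl
  | cons p s ih => simp only [cval_cons, lie_sub, ih]

lemma ne_zero_of_cval_ne_zero {x : L} {s : List ((Fin n → ℤ) × L)} (h : cval x s ≠ 0) :
    x ≠ 0 := by
  rintro rfl; exact h (cval_zero s)

@[simp] lemma csum_nil : csum ([] : List ((Fin n → ℤ) × L)) = 0 := rfl

@[simp] lemma csum_cons (p : (Fin n → ℤ) × L) (s : List ((Fin n → ℤ) × L)) :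
    csum (p :: s) = p.1 + csum s := by
  simp [csum]

lemma csum_append (s t : List ((Fin n → ℤ) × L)) :
    csum (s ++ t) = csum s + csum t := by
  simp [csum]

lemma cgood_cons {p : (Fin n → ℤ) × L} {s : List ((Fin n → ℤ) × L)} :
    cgood D (p :: s) ↔ p.2 ∈ D.G p.1 ∧ cgood D s := by
  simp [cgood]

lemma cgood_append {s t : List ((Fin n → ℤ) × L)} :
    cgood D (s ++ t) ↔ cgood D s ∧ cgood D t := by
  simp [cgood, or_imp, forall_and]

lemma cval_mem {x : L} {γ : Fin n → ℤ} (hx : x ∈ D.G γ) {s : List ((Fin n → ℤ) × L)}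
    (hs : cgood D s) : cval x s ∈ D.G (γ + csum s) := by
  induction s generalizing x γ with
  | nil => simpa using hx
  | cons p s ih =>
      rw [cgood_cons] at hs
      have h1 : ⁅p.2, x⁆ ∈ D.G (p.1 + γ) := D.bracket_mem _ _ _ _ hs.1 hx
      have := ih h1 hs.2
      rw [cval_cons]
      convert this using 2
      rw [csum_cons]
      abel

/-- The fundamental swap identity for chain values. -/
lemma cval_swap (x : L) (t u : List ((Fin n → ℤ) × L)) (p q : (Fin n → ℤ) × L) :
    cval x (t ++ q :: p :: u)
      = cval x (t ++ p :: q :: u) - cval x (t ++ (p.1 + q.1, ⁅q.2, p.2⁆) :: u) := by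
  rw [cval_append, cval_append, cval_append]
  set y := cval x t
  rw [cval_cons, cval_cons, cval_cons, cval_cons, cval_cons, ← cval_sub]
  congr 1
  rw [lie_lie]
  abel

end Chains

section Basic

variable {D : GradedLie n L}

lemma mem_supp_of_ne_zero {γ : Fin n → ℤ} {x : L} (hx : x ∈ D.G γ) (hx0 : x ≠ 0) :
    γ ∈ D.Supp := by
  intro hbot
  rw [hbot] at hx
  exact hx0 hx

/-- In a component of rank at most one, any element is a multiple of a fixed nonzero element. -/
lemma line_lemma (hrk : Module.rank ℂ (D.G γ) ≤ 1) {x y : L}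
    (hx : x ∈ D.G γ) (hy : y ∈ D.G γ) (hx0 : x ≠ 0) : ∃ t : ℂ, y = t • x := by
  rw [rank_le_one_iff] at hrk
  obtain ⟨v₀, hv₀⟩ := hrk
  obtain ⟨r, hr⟩ := hv₀ ⟨x, hx⟩
  obtain ⟨s, hs⟩ := hv₀ ⟨y, hy⟩
  have hr0 : r ≠ 0 := by
    rintro rfl
    apply hx0
    have := congrArg (Subtype.val) hr
    simpa using this.symm
  refine ⟨s / r, ?_⟩
  have hrx : r • (v₀ : L) = x := congrArg Subtype.val hr
  have hsy : s • (v₀ : L) = y := congrArg Subtype.val hs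
  rw [← hsy, ← hrx, smul_smul, div_mul_cancel₀ _ hr0]

variable (L0 : L) (l : (Fin n → ℤ) → ℂ)

/-- `l 0 = 0`. -/
lemma l_zero (hL0 : L0 ∈ D.G 0) (hL0ne : L0 ≠ 0)
    (hl : ∀ (lam : Fin n → ℤ) (x : L), x ∈ D.G lam → ⁅L0, x⁆ = l lam • x) : l 0 = 0 := by
  have h := hl 0 L0 hL0
  rw [lie_self] at h
  rcases smul_eq_zero.mp h.symm with h | h
  · exact h
  · exact absurd h hL0ne

/-- additivity of `l` on nonvanishing brackets. -/
lemma l_add (hl : ∀ (lam : Fin n → ℤ) (x : L), x ∈ D.G lam → ⁅L0, x⁆ = l lam • x)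
    {γ μ : Fin n → ℤ} {x y : L} (hx : x ∈ D.G γ) (hy : y ∈ D.G μ)
    (hxy : ⁅x, y⁆ ≠ 0) : l (γ + μ) = l γ + l μ := by
  have h1 : ⁅L0, ⁅x, y⁆⁆ = l (γ + μ) • ⁅x, y⁆ :=
    hl _ _ (D.bracket_mem _ _ _ _ hx hy)
  have h2 : ⁅L0, ⁅x, y⁆⁆ = (l γ + l μ) • ⁅x, y⁆ := by
    rw [leibniz_lie, hl _ _ hx, hl _ _ hy, add_smul]
    rw [smul_lie, lie_smul]
  have := h1.symm.trans h2
  rw [← sub_eq_zero, ← sub_smul] at this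
  rcases smul_eq_zero.mp this with h | h
  · linear_combination h
  · exact absurd h hxy

variable (N : ℕ)

/-- Extraction of the integer value of `l` on the support. -/
lemma l_window (htype : l '' D.Supp = (fun k : ℤ => (k : ℂ)) '' Set.Icc (-(N : ℤ)) (N : ℤ))
    {γ : Fin n → ℤ} (hγ : γ ∈ D.Supp) : ∃ k : ℤ, -(N : ℤ) ≤ k ∧ k ≤ N ∧ l γ = k := by
  have : l γ ∈ l '' D.Supp := ⟨γ, hγ, rfl⟩
  rw [htype] at this
  obtain ⟨k, hk, hkl⟩ := this
  exact ⟨k, hk.1, hk.2, hkl.symm⟩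

/-- Brackets whose total `l`-value falls outside the window vanish. -/
lemma bracket_eq_zero_of_overflow
    (hl : ∀ (lam : Fin n → ℤ) (x : L), x ∈ D.G lam → ⁅L0, x⁆ = l lam • x)
    (htype : l '' D.Supp = (fun k : ℤ => (k : ℂ)) '' Set.Icc (-(N : ℤ)) (N : ℤ))
    {γ μ : Fin n → ℤ} {x y : L} (hx : x ∈ D.G γ) (hy : y ∈ D.G μ)
    (s t : ℤ) (hs : l γ = s) (ht : l μ = t)
    (hover : (N : ℤ) < s + t ∨ s + t < -(N : ℤ)) : ⁅x, y⁆ = 0 := by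
  by_contra hne
  have hmem : γ + μ ∈ D.Supp :=
    mem_supp_of_ne_zero (D.bracket_mem _ _ _ _ hx hy) hne
  obtain ⟨k, hk1, hk2, hkl⟩ := l_window l N htype hmem
  have hadd := l_add L0 l hl hx hy hne
  rw [hkl, hs, ht] at hadd
  have : k = s + t := by exact_mod_cast hadd
  omega

end Basic

section StringLemma

variable {D : GradedLie n L} (L0 : L) (l : (Fin n → ℤ) → ℂ) (N : ℕ)

lemma smul_cancel_of_ne_zero {a b : ℂ} {z : L} (hz : z ≠ 0) (h : a • z = b • z) : a = b := by
  have : (a - b) • z = 0 := by rw [sub_smul, h, sub_self]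
  rcases smul_eq_zero.mp this with h' | h'
  · exact sub_eq_zero.mp h'
  · exact absurd h' hz

/-- The fundamental string computation: if `e ∈ 𝓛_β`, `f ∈ 𝓛_{-β}` pair to `κ • L0`, and
`v` is homogeneous of positive weight `M`, then `⁅e, ⁅f, v⁆⁆ = (κ * S) • v` for a positive
integer `S`. -/
lemma string_lemma
    (hrk : ∀ lam, Module.rank ℂ (D.G lam) ≤ 1)
    (hl : ∀ (lam : Fin n → ℤ) (x : L), x ∈ D.G lam → ⁅L0, x⁆ = l lam • x)
    (htype : l '' D.Supp = (fun k : ℤ => (k : ℂ)) '' Set.Icc (-(N : ℤ)) (N : ℤ))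
    (hN : 0 < N)
    {β : Fin n → ℤ} {e f : L} (he : e ∈ D.G β) (hf : f ∈ D.G (-β))
    {m : ℤ} (hm : 1 ≤ m) (hlβ : l β = m)
    {κ : ℂ} (hef : ⁅e, f⁆ = κ • L0)
    {δ : Fin n → ℤ} {v : L} (hv : v ∈ D.G δ) (hv0 : v ≠ 0)
    {M : ℤ} (hM : 1 ≤ M) (hlδ : l δ = M) :
    ∃ S : ℤ, 0 < S ∧ ⁅e, ⁅f, v⁆⁆ = (κ * S) • v := by
  classical
  -- the ascending chain
  set w : ℕ → L := fun r => (fun z => ⁅e, z⁆)^[r] v with hw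
  have hw0 : w 0 = v := rfl
  have hwsucc : ∀ r, w (r + 1) = ⁅e, w r⁆ := fun r => Function.iterate_succ_apply' _ _ _
  have hwmem : ∀ r, w r ∈ D.G (δ + r • β) := by
    intro r
    induction r with
    | zero => simpa [hw0] using hv
    | succ r ih =>
        have h1 : ⁅e, w r⁆ ∈ D.G (β + (δ + r • β)) := D.bracket_mem _ _ _ _ he ih
        rw [hwsucc]
        convert h1 using 2
        rw [succ_nsmul]
        abel
  have hwz : ∀ r, w r = 0 → w (r + 1) = 0 := by
    intro r h
    rw [hwsucc, h, lie_zero]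
  have hwl : ∀ r, w r ≠ 0 → l (δ + r • β) = ((M + (r : ℤ) * m : ℤ) : ℂ) := by
    intro r
    induction r with
    | zero => intro _; simpa using hlδ
    | succ r ih =>
        intro hne
        have hr : w r ≠ 0 := fun h => hne (hwz r h)
        have hbr : ⁅e, w r⁆ ≠ 0 := by rw [← hwsucc]; exact hne
        have h2 := l_add L0 l hl he (hwmem r) hbr
        have hdeg : β + (δ + r • β) = δ + (r + 1) • β := by
          rw [succ_nsmul]; abel
        rw [hdeg] at h2
        rw [h2, hlβ, ih hr]
        push_cast
        ring
  -- termination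
  have hterm : w N = 0 := by
    by_contra hne
    have hmem := mem_supp_of_ne_zero (hwmem N) hne
    obtain ⟨k, hk1, hk2, hkl⟩ := l_window l N htype hmem
    have h3 := (hwl N hne).symm.trans hkl
    have hkk : (M + (N : ℤ) * m : ℤ) = k := by exact_mod_cast h3
    have : (N : ℤ) * 1 ≤ (N : ℤ) * m :=
      mul_le_mul_of_nonneg_left hm (by positivity)
    omega
  -- the top of the string
  have hPex : ∃ r, w (r + 1) = 0 := by
    refine ⟨N - 1, ?_⟩
    have h4 : N - 1 + 1 = N := Nat.succ_pred_eq_of_pos hN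
    rw [h4]; exact hterm
  set R := Nat.find hPex with hR
  have hRtop : w (R + 1) = 0 := Nat.find_spec hPex
  have hRne : ∀ r ≤ R, w r ≠ 0 := by
    intro r hr
    cases r with
    | zero => exact hv0
    | succ i => exact Nat.find_min hPex (by omega)
  -- descending coefficients
  have hfw : ∀ d r, r + d = R →
      ⁅f, w (r + 1)⁆
        = (κ * ∑ i ∈ Finset.Ico (r + 1) (R + 1), ((M + (i : ℤ) * m : ℤ) : ℂ)) • w r := by
    intro d
    induction d with
    | zero =>
        intro r hr
        have hrR : r = R := by omega
        subst hrR
        rw [hRtop, lie_zero, Finset.Ico_self, Finset.sum_empty, mul_zero, zero_smul]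
    | succ d ih =>
        intro r hr
        have hr1R : r + 1 ≤ R := by omega
        have hw1ne : w (r + 1) ≠ 0 := hRne _ hr1R
        have hid : ⁅⁅e, f⁆, w (r + 1)⁆ = ⁅e, ⁅f, w (r + 1)⁆⁆ - ⁅f, ⁅e, w (r + 1)⁆⁆ :=
          lie_lie _ _ _
        have hLHS : ⁅⁅e, f⁆, w (r + 1)⁆
            = (κ * ((M + ((r : ℤ) + 1) * m : ℤ) : ℂ)) • w (r + 1) := by
          rw [hef, smul_lie, hl _ _ (hwmem (r + 1)), hwl (r + 1) hw1ne, smul_smul]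
          push_cast
          ring_nf
        have hIH : ⁅f, w (r + 1 + 1)⁆
            = (κ * ∑ i ∈ Finset.Ico (r + 1 + 1) (R + 1), ((M + (i : ℤ) * m : ℤ) : ℂ))
              • w (r + 1) := ih (r + 1) (by omega)
        -- the unknown bracket lies on the line of w r
        have hXmem : ⁅f, w (r + 1)⁆ ∈ D.G (δ + r • β) := by
          have h1 : ⁅f, w (r + 1)⁆ ∈ D.G (-β + (δ + (r + 1) • β)) :=
            D.bracket_mem _ _ _ _ hf (hwmem (r + 1))
          convert h1 using 2
          rw [succ_nsmul]
          abel
        obtain ⟨t, ht⟩ := line_lemma (hrk _) (hwmem r) hXmem (hRne r (by omega))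
        have heX : ⁅e, ⁅f, w (r + 1)⁆⁆ = t • w (r + 1) := by
          rw [ht, lie_smul, ← hwsucc]
        rw [heX, ← hwsucc (r + 1), hIH] at hid
        have hsum : ∑ i ∈ Finset.Ico (r + 1) (R + 1), ((M + (i : ℤ) * m : ℤ) : ℂ)
            = ((M + ((r : ℤ) + 1) * m : ℤ) : ℂ)
              + ∑ i ∈ Finset.Ico (r + 1 + 1) (R + 1), ((M + (i : ℤ) * m : ℤ) : ℂ) := by
          rw [Finset.sum_eq_sum_Ico_succ_bot (by omega)]
          congr 1
          all_goals push_cast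
          all_goals ring
        have ht' : t = κ * ∑ i ∈ Finset.Ico (r + 1) (R + 1), ((M + (i : ℤ) * m : ℤ) : ℂ) := by
          have h6 : t • w (r + 1)
              - (κ * ∑ i ∈ Finset.Ico (r + 1 + 1) (R + 1), ((M + (i : ℤ) * m : ℤ) : ℂ))
                • w (r + 1)
              = (κ * ((M + ((r : ℤ) + 1) * m : ℤ) : ℂ)) • w (r + 1) :=
            (hLHS.symm.trans hid).symm
          have h5 : t • w (r + 1)
              = (κ * ((M + ((r : ℤ) + 1) * m : ℤ) : ℂ)
                + κ * ∑ i ∈ Finset.Ico (r + 1 + 1) (R + 1), ((M + (i : ℤ) * m : ℤ) : ℂ))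
                • w (r + 1) := by
            rw [add_smul]
            exact sub_eq_iff_eq_add.mp h6
          have := smul_cancel_of_ne_zero hw1ne h5
          rw [this, hsum]
          ring
        rw [ht, ht']
  -- conclusion
  have hfinal : ⁅e, ⁅f, v⁆⁆
      = (κ * ∑ i ∈ Finset.Ico 0 (R + 1), ((M + (i : ℤ) * m : ℤ) : ℂ)) • v := by
    have hid : ⁅⁅e, f⁆, v⁆ = ⁅e, ⁅f, v⁆⁆ - ⁅f, ⁅e, v⁆⁆ := lie_lie _ _ _
    have hLHS : ⁅⁅e, f⁆, v⁆ = (κ * (M : ℂ)) • v := by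
      rw [hef, smul_lie, hl _ _ hv, hlδ, smul_smul]
    have hB : ⁅f, w (0 + 1)⁆
        = (κ * ∑ i ∈ Finset.Ico (0 + 1) (R + 1), ((M + (i : ℤ) * m : ℤ) : ℂ)) • w 0 :=
      hfw R 0 (by omega)
    rw [hw0] at hB
    have hw1 : w (0 + 1) = ⁅e, v⁆ := by rw [hwsucc, hw0]
    rw [hw1] at hB
    rw [hB] at hid
    have hsum : ∑ i ∈ Finset.Ico 0 (R + 1), ((M + (i : ℤ) * m : ℤ) : ℂ)
        = ((M : ℤ) : ℂ) + ∑ i ∈ Finset.Ico (0 + 1) (R + 1), ((M + (i : ℤ) * m : ℤ) : ℂ) := by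
      rw [Finset.sum_eq_sum_Ico_succ_bot (by omega)]
      congr 1
      all_goals push_cast
      all_goals ring
    rw [hsum]
    have : ⁅e, ⁅f, v⁆⁆ = ⁅⁅e, f⁆, v⁆
        + (κ * ∑ i ∈ Finset.Ico (0 + 1) (R + 1), ((M + (i : ℤ) * m : ℤ) : ℂ)) • v := by
      rw [hid]; abel
    rw [this, hLHS, ← add_smul]
    congr 1
    push_cast
    ring
  refine ⟨∑ i ∈ Finset.Ico 0 (R + 1), (M + (i : ℤ) * m), ?_, ?_⟩
  · apply Finset.sum_pos
    · intro i _
      have : (0 : ℤ) ≤ (i : ℤ) * m := by positivity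
      omega
    · exact ⟨0, by simp⟩
  · have hcast : ((∑ i ∈ Finset.Ico 0 (R + 1), (M + (i : ℤ) * m) : ℤ) : ℂ)
        = ∑ i ∈ Finset.Ico 0 (R + 1), ((M + (i : ℤ) * m : ℤ) : ℂ) := by
      norm_cast
    rw [hfinal, hcast]

end StringLemma

section Extraction

variable {D : GradedLie n L}

/-- By graded simplicity, from any nonzero homogeneous element there is a chain of brackets
with homogeneous entries reaching the zero component nontrivially. -/
lemma exists_chain_to_zero (hD : D.InClassG')
    {L0 : L} (hL0 : L0 ∈ D.G 0) (hL0ne : L0 ≠ 0)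
    {γ : Fin n → ℤ} {x : L} (hx : x ∈ D.G γ) (hx0 : x ≠ 0) :
    ∃ s : List ((Fin n → ℤ) × L), cgood D s ∧ γ + csum s = 0 ∧ cval x s ≠ 0 := by
  classical
  by_contra hno
  push_neg at hno
  set SGen : Set L := {w | ∃ s, cgood D s ∧ cval x s = w} with hSGen
  set I : Submodule ℂ L := Submodule.span ℂ SGen with hI
  have hgen : ∀ s, cgood D s → cval x s ∈ I := fun s hs => Submodule.subset_span ⟨s, hs, rfl⟩
  have hbr : ∀ (z w : L), w ∈ I → ⁅z, w⁆ ∈ I := by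
    intro z w hw
    induction hw using Submodule.span_induction with
    | mem w hw =>
        obtain ⟨s, hs, rfl⟩ := hw
        have hz : z ∈ (⊤ : Submodule ℂ L) := trivial
        rw [← D.internal.submodule_iSup_eq_top] at hz
        refine Submodule.iSup_induction (motive := fun z => ⁅z, cval x s⁆ ∈ I) _ hz ?_ ?_ ?_
        · intro i u hu
          have he : ⁅u, cval x s⁆ = cval x (s ++ [(i, u)]) := by
            rw [cval_append]; rfl
          rw [he]
          refine hgen _ (cgood_append.mpr ⟨hs, ?_⟩)
          intro p hp
          simp only [List.mem_singleton] at hp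
          subst hp
          exact hu
        · simpa using I.zero_mem
        · intro a b ha hb
          rw [add_lie]
          exact I.add_mem ha hb
    | zero => simpa using I.zero_mem
    | add a b _ _ ha hb => rw [lie_add]; exact I.add_mem ha hb
    | smul c a _ ha => rw [lie_smul]; exact I.smul_mem c ha
  set J : LieIdeal ℂ L := { I with lie_mem := fun {z w} hw => hbr z w hw } with hJ
  have hJI : (J : Submodule ℂ L) = I := rfl
  have hgraded : D.IsGradedIdeal J := by
    rw [GradedLie.IsGradedIdeal, hJI]
    apply le_antisymm
    · rw [hI]
      apply Submodule.span_le.mpr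
      rintro w ⟨s, hs, rfl⟩
      have h1 : cval x s ∈ I ⊓ D.G (γ + csum s) :=
        ⟨hgen s hs, cval_mem hx hs⟩
      exact le_iSup (fun lam => I ⊓ D.G lam) (γ + csum s) h1
    · exact iSup_le fun lam => inf_le_left
  have hxI : x ∈ I := by
    have := hgen [] (by intro p hp; simp at hp)
    simpa using this
  rcases hD.1.2 J hgraded with h | h
  · have : (J : Submodule ℂ L) = ⊥ := by
      rw [h]; rfl
    rw [hJI] at this
    rw [this] at hxI
    exact hx0 (by simpa using hxI)
  · have htop : (J : Submodule ℂ L) = ⊤ := by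
      rw [h]; rfl
    rw [hJI] at htop
    have hL0I : L0 ∈ I := by rw [htop]; trivial
    -- but I is contained in the sum of the nonzero components
    set T : Submodule ℂ L := ⨆ d ∈ {d : Fin n → ℤ | d ≠ 0}, D.G d with hT
    have hIT : I ≤ T := by
      rw [hI]
      apply Submodule.span_le.mpr
      rintro w ⟨s, hs, rfl⟩
      by_cases hd : γ + csum s = 0
      · rw [hno s hs hd]
        exact T.zero_mem
      · exact le_biSup (fun d => D.G d) hd (cval_mem hx hs)
    have hdisj : Disjoint (D.G 0) T :=
      D.internal.submodule_iSupIndep.disjoint_biSup (by simp)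
    exact hL0ne (Submodule.disjoint_def.mp hdisj L0 hL0 (hIT hL0I))

end Extraction

section FrontMove

variable {D : GradedLie n L}

/-- In a chain of minimal length with nonzero value, any step can be moved to the front
without changing the value (all "merged" shorter chains vanish). -/
lemma cval_front {γ : Fin n → ℤ} {x : L} (k : ℕ)
    (hzero : ∀ s' : List ((Fin n → ℤ) × L), cgood D s' → s'.length + 1 = k →
      γ + csum s' = 0 → cval x s' = 0) :
    ∀ (t : List ((Fin n → ℤ) × L)) (p : (Fin n → ℤ) × L) (u : List ((Fin n → ℤ) × L)),
      cgood D (t ++ p :: u) → (t ++ p :: u).length = k → γ + csum (t ++ p :: u) = 0 →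
      cval x (p :: (t ++ u)) = cval x (t ++ p :: u) := by
  intro t
  induction t using List.reverseRecOn with
  | nil => intro p u _ _ _; rfl
  | append_singleton t' q ih =>
      intro p u hgood hlen hsum
      have hre : (t' ++ [q]) ++ p :: u = t' ++ q :: p :: u := by simp
      rw [hre] at hgood hlen hsum ⊢
      -- swap q and p
      have hswap := cval_swap x t' u p q
      have hmerged : cval x (t' ++ (p.1 + q.1, ⁅q.2, p.2⁆) :: u) = 0 := by
        apply hzero
        · rw [cgood_append] at hgood ⊢
          rcases hgood with ⟨h1, h2⟩
          rw [cgood_cons] at h2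
          rcases h2 with ⟨hq2, h2⟩
          rw [cgood_cons] at h2
          rcases h2 with ⟨hp2, h2⟩
          refine ⟨h1, ?_⟩
          rw [cgood_cons]
          refine ⟨?_, h2⟩
          have hb := D.bracket_mem _ _ _ _ hq2 hp2
          rwa [add_comm] at hb
        · simp at hlen ⊢
          omega
        · rw [csum_append] at hsum ⊢
          simp only [csum_cons] at hsum ⊢
          convert hsum using 2
          abel
      rw [hmerged, sub_zero] at hswap
      -- now p is adjacent to the left block t'
      have hg' : cgood D (t' ++ p :: q :: u) := by
        rw [cgood_append] at hgood ⊢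
        rcases hgood with ⟨h1, h2⟩
        rw [cgood_cons] at h2
        rcases h2 with ⟨hq2, h2⟩
        rw [cgood_cons] at h2
        rcases h2 with ⟨hp2, h2⟩
        exact ⟨h1, by rw [cgood_cons]; exact ⟨hp2, by rw [cgood_cons]; exact ⟨hq2, h2⟩⟩⟩
      have hl' : (t' ++ p :: q :: u).length = k := by
        simp at hlen ⊢; omega
      have hs' : γ + csum (t' ++ p :: q :: u) = 0 := by
        rw [csum_append] at hsum ⊢
        simp only [csum_cons] at hsum ⊢
        rw [← hsum]
        congr 1
        abel
      have hih := ih p (q :: u) hg' hl' hs'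
      rw [← hswap] at hih
      simpa using hih
end FrontMove

/-- Lemma 24: an integrable Lie algebra in 𝒢' is of type 1, or of type 2 with `Σ₂ ≠ ∅`. -/
theorem type_one_or_type_two
    (hn : 1 ≤ n)
    (D : GradedLie n L) (hD : D.InClassG')
    (L0 : L) (hL0 : L0 ∈ D.G 0) (hL0ne : L0 ≠ 0)
    (l : (Fin n → ℤ) → ℂ)
    (hl : ∀ (lam : Fin n → ℤ) (x : L), x ∈ D.G lam → ⁅L0, x⁆ = l lam • x)
    (N : ℕ) (hN : 0 < N)
    (α : Fin n → ℤ) (hα : α ∈ D.SigmaSet l) (hlα : l α = 1)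
    (htype : l '' D.Supp = (fun k : ℤ => (k : ℂ)) '' Set.Icc (-(N : ℤ)) (N : ℤ)) :
    N = 1 ∨ (N = 2 ∧ {β | β ∈ D.SigmaSet l ∧ l β = 2}.Nonempty) := by
  classical
  by_cases hN1 : N = 1
  · exact Or.inl hN1
  have hN2 : 2 ≤ N := by omega
  right
  have hrk : ∀ lam, Module.rank ℂ (D.G lam) ≤ 1 := hD.2.1
  obtain ⟨⟨hαS, hnαS, eα, heα, yα, hyα, hbrα⟩, hlα0⟩ := hα
  have heα0 : eα ≠ 0 := by rintro rfl; rw [zero_lie] at hbrα; exact hbrα rfl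
  have hl00 : l 0 = 0 := l_zero L0 l hL0 hL0ne hl
  have hlα1 : l α = ((1 : ℤ) : ℂ) := by rw [hlα]; norm_num
  -- a generator of weight N exists
  have hNim : ((N : ℤ) : ℂ) ∈ l '' D.Supp := by
    rw [htype]
    exact ⟨(N : ℤ), Set.mem_Icc.mpr ⟨by omega, le_refl _⟩, rfl⟩
  obtain ⟨γN, hγNS, hlγN⟩ := hNim
  obtain ⟨xN, hxN, hxN0⟩ := (Submodule.ne_bot_iff _).mp hγNS
  -- the minimal chain
  set P : ℕ → Prop := fun k => ∃ (γ : Fin n → ℤ) (x : L) (s : List ((Fin n → ℤ) × L)),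
      x ∈ D.G γ ∧ l γ = ((N : ℤ) : ℂ) ∧ cgood D s ∧ s.length = k ∧ γ + csum s = 0 ∧
        cval x s ≠ 0 with hPdef
  have hPex : ∃ k, P k := by
    obtain ⟨s, hgood, hsum, hval⟩ := exists_chain_to_zero hD hL0 hL0ne hxN hxN0
    exact ⟨s.length, γN, xN, s, hxN, hlγN, hgood, rfl, hsum, hval⟩
  set k₀ := Nat.find hPex with hk₀
  obtain ⟨γ, x, s, hx, hlγ, hgood, hslen, hsum0, hval⟩ : P k₀ := Nat.find_spec hPex
  have hx0 : x ≠ 0 := ne_zero_of_cval_ne_zero hval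
  have hγS : γ ∈ D.Supp := mem_supp_of_ne_zero hx hx0
  have hzero : ∀ s' : List ((Fin n → ℤ) × L), cgood D s' → s'.length + 1 = k₀ →
      γ + csum s' = 0 → cval x s' = 0 := by
    intro s' hc hlen hsum
    by_contra hne
    exact Nat.find_min hPex (by omega) ⟨γ, x, s', hx, hlγ, hc, rfl, hsum, hne⟩
  -- every step of the minimal chain has weight ≤ -1
  have hstep : ∀ (t : List ((Fin n → ℤ) × L)) (p : (Fin n → ℤ) × L)
      (u : List ((Fin n → ℤ) × L)), s = t ++ p :: u →
      ∃ sp : ℤ, l p.1 = (sp : ℂ) ∧ sp ≤ -1 := by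
    intro t p u hsplit
    subst hsplit
    have hfront := cval_front k₀ hzero t p u hgood hslen hsum0
    have hvfront : cval x (p :: (t ++ u)) ≠ 0 := by rw [hfront]; exact hval
    have hpre : ⁅p.2, x⁆ ≠ 0 := by
      intro h0
      apply hvfront
      rw [cval_cons, h0, cval_zero]
    have hp2 : p.2 ∈ D.G p.1 := hgood p (by simp)
    have hp20 : p.2 ≠ 0 := fun h => hpre (by rw [h, zero_lie])
    obtain ⟨sp, hsp1, hsp2, hsplp⟩ := l_window l N htype (mem_supp_of_ne_zero hp2 hp20)
    have hadd := l_add L0 l hl hp2 hx hpre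
    obtain ⟨kk, hkk1, hkk2, hlkk⟩ := l_window l N htype
      (mem_supp_of_ne_zero (D.bracket_mem _ _ _ _ hp2 hx) hpre)
    have hkkeq : kk = sp + N := by
      have h1 : ((kk : ℤ) : ℂ) = ((sp + (N : ℤ) : ℤ) : ℂ) := by
        rw [← hlkk, hadd, hsplp, hlγ]; push_cast; ring
      exact_mod_cast h1
    refine ⟨sp, hsplp, ?_⟩
    by_contra hpos
    push_neg at hpos
    have hsp0 : sp = 0 := by omega
    have hlnew : l (p.1 + γ) = ((N : ℤ) : ℂ) := by
      rw [hadd, hsplp, hsp0, hlγ]; push_cast; ring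
    have hk1 : 1 ≤ k₀ := by
      rw [← hslen]; simp only [List.length_append, List.length_cons]; omega
    have hPk : P (k₀ - 1) := by
      refine ⟨p.1 + γ, ⁅p.2, x⁆, t ++ u, D.bracket_mem _ _ _ _ hp2 hx, hlnew, ?_, ?_, ?_, ?_⟩
      · rw [cgood_append] at hgood ⊢
        rcases hgood with ⟨hg1, hg2⟩
        rw [cgood_cons] at hg2
        exact ⟨hg1, hg2.2⟩
      · have hlen' : t.length + (u.length + 1) = k₀ := by
          rw [← hslen]; simp
        simp
        omega
      · rw [csum_append] at hsum0 ⊢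
        simp only [csum_cons] at hsum0
        rw [← hsum0]
        abel
      · rw [← cval_cons]
        exact hvfront
    exact Nat.find_min hPex (show k₀ - 1 < k₀ by omega) hPk
  -- case analysis on the minimal length
  rcases show k₀ = 0 ∨ k₀ = 1 ∨ 2 ≤ k₀ by omega with h0 | h1 | h2
  · -- impossible : the generator itself would have degree 0
    exfalso
    rw [h0] at hslen
    rw [List.length_eq_zero_iff] at hslen
    subst hslen
    have hγ0 : γ = 0 := by simpa using hsum0
    rw [hγ0, hl00] at hlγ
    have hNz : (N : ℤ) = 0 := by exact_mod_cast hlγ.symm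
    omega
  · -- length one : γ is a weight-N element of Π, hence N = 2
    rw [h1] at hslen
    obtain ⟨p, rfl⟩ := List.length_eq_one_iff.mp hslen
    have hp2 : p.2 ∈ D.G p.1 := hgood p (by simp)
    have hWne : ⁅p.2, x⁆ ≠ 0 := by
      simpa only [cval_cons, cval_nil] using hval
    have hp20 : p.2 ≠ 0 := fun h => hWne (by rw [h, zero_lie])
    have hγp : γ + p.1 = 0 := by simpa using hsum0
    have hpγ : p.1 + γ = 0 := by rw [add_comm]; exact hγp
    have hWmem : ⁅p.2, x⁆ ∈ D.G 0 := by
      have hmem := D.bracket_mem _ _ _ _ hp2 hx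
      rwa [hpγ] at hmem
    obtain ⟨κ, hκ⟩ := line_lemma (hrk 0) hL0 hWmem hL0ne
    have hκ0 : κ ≠ 0 := by rintro rfl; rw [zero_smul] at hκ; exact hWne hκ
    have hlp : l p.1 = ((-(N : ℤ) : ℤ) : ℂ) := by
      have hadd := l_add L0 l hl hp2 hx hWne
      rw [hpγ, hl00, hlγ] at hadd
      push_cast at hadd ⊢
      linear_combination -hadd
    have hxe : ⁅x, eα⁆ = 0 :=
      bracket_eq_zero_of_overflow L0 l N hl htype hx heα (N : ℤ) 1 hlγ hlα1
        (Or.inl (by omega))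
    have hxp : ⁅x, p.2⁆ = (-κ) • L0 := by
      rw [← lie_skew, hκ, neg_smul]
    have hxg : ⁅x, ⁅p.2, eα⁆⁆ = (-κ) • eα := by
      rw [leibniz_lie, hxe, lie_zero, add_zero, hxp, smul_lie, hl α eα heα, hlα, one_smul]
    have hgmem : ⁅p.2, eα⁆ ∈ D.G (p.1 + α) := D.bracket_mem _ _ _ _ hp2 heα
    have hg : ⁅p.2, eα⁆ ≠ 0 := by
      intro hg0
      rw [hg0, lie_zero] at hxg
      exact smul_ne_zero (neg_ne_zero.mpr hκ0) heα0 hxg.symm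
    have hlg : l (p.1 + α) = ((1 - (N : ℤ) : ℤ) : ℂ) := by
      rw [l_add L0 l hl hp2 heα hg, hlp, hlα]
      push_cast
      ring
    have hpg : ⁅p.2, ⁅p.2, eα⁆⁆ = 0 :=
      bracket_eq_zero_of_overflow L0 l N hl htype hp2 hgmem (-(N : ℤ)) (1 - (N : ℤ))
        hlp hlg (Or.inr (by omega))
    have hzero2 : ((-κ) * ((1 - (N : ℤ) : ℤ) : ℂ) + (-κ)) • ⁅p.2, eα⁆ = 0 := by
      have hz0 : ⁅x, ⁅p.2, ⁅p.2, eα⁆⁆⁆ = 0 := by rw [hpg, lie_zero]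
      rw [leibniz_lie, hxp, smul_lie, hl _ _ hgmem, hlg, hxg, lie_smul, smul_smul] at hz0
      rw [add_smul]
      exact hz0
    have hcoef : (-κ) * (((1 - (N : ℤ) : ℤ) : ℂ) + 1) = 0 := by
      rcases smul_eq_zero.mp hzero2 with h | h
      · linear_combination h
      · exact absurd h hg
    have hNeq : N = 2 := by
      rcases mul_eq_zero.mp hcoef with h | h
      · exact absurd (neg_eq_zero.mp h) hκ0
      · have h2 : ((2 - (N : ℤ) : ℤ) : ℂ) = 0 := by
          push_cast at h ⊢
          linear_combination h
        have h3 : (2 - (N : ℤ) : ℤ) = 0 := by exact_mod_cast h2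
        omega
    have hp1 : p.1 = -γ := eq_neg_of_add_eq_zero_right hγp
    refine ⟨hNeq, γ, ⟨⟨hγS, ?_, x, hx, p.2, ?_, ?_⟩, ?_⟩, ?_⟩
    · rw [← hp1]
      exact mem_supp_of_ne_zero hp2 hp20
    · rw [← hp1]
      exact hp2
    · rw [hxp]
      exact smul_ne_zero (neg_ne_zero.mpr hκ0) hL0ne
    · rw [hlγ]
      exact Int.cast_ne_zero.mpr (by omega)
    · rw [hlγ, hNeq]
      norm_num
  · -- minimal length at least two is impossible
    exfalso
    obtain ⟨s₁, q, rfl⟩ := s.eq_nil_or_concat'.resolve_left (by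
      rintro rfl
      simp at hslen
      omega)
    obtain ⟨t, p, rfl⟩ := s₁.eq_nil_or_concat'.resolve_left (by
      rintro rfl
      simp at hslen
      omega)
    have h12 := cgood_append.mp hgood
    have h34 := cgood_append.mp h12.1
    have hgt : cgood D t := h34.1
    have hp2 : p.2 ∈ D.G p.1 := h34.2 p (by simp)
    have hq2 : q.2 ∈ D.G q.1 := h12.2 q (by simp)
    set v := cval x t with hvdef
    have hvmem : v ∈ D.G (γ + csum t) := cval_mem hx hgt
    have hlen' : t.length + 1 + 1 = k₀ := by simpa using hslen
    have hWform : cval x ((t ++ [p]) ++ [q]) = ⁅q.2, ⁅p.2, v⁆⁆ := by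
      rw [cval_append, cval_append]
      rfl
    have hWv : ⁅q.2, ⁅p.2, v⁆⁆ ≠ 0 := by rw [← hWform]; exact hval
    -- swap the two final steps
    have hmerge0 : cval x (t ++ [(p.1 + q.1, ⁅q.2, p.2⁆)]) = 0 := by
      apply hzero
      · rw [cgood_append]
        refine ⟨hgt, ?_⟩
        intro r hr
        simp only [List.mem_singleton] at hr
        subst hr
        have hb := D.bracket_mem _ _ _ _ hq2 hp2
        rwa [add_comm] at hb
      · simp
        omega
      · have hcs : csum (t ++ [(p.1 + q.1, ⁅q.2, p.2⁆)]) = csum ((t ++ [p]) ++ [q]) := by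
          simp only [csum_append, csum_cons, csum_nil]
          abel
        rw [hcs]
        exact hsum0
    have hswap := cval_swap x t ([] : List ((Fin n → ℤ) × L)) p q
    rw [hmerge0, sub_zero] at hswap
    have hEjp : ⁅p.2, ⁅q.2, v⁆⁆ = ⁅q.2, ⁅p.2, v⁆⁆ := by
      have hv1 : cval x (t ++ [q, p]) = ⁅p.2, ⁅q.2, v⁆⁆ := by
        rw [cval_append]; rfl
      have hv2 : cval x (t ++ [p, q]) = ⁅q.2, ⁅p.2, v⁆⁆ := by
        rw [cval_append]; rfl
      rw [← hv1, ← hv2]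
      exact hswap
    have hEl : ⁅p.2, v⁆ ≠ 0 := by
      intro h
      rw [h, lie_zero] at hWv
      exact hWv rfl
    have hEj : ⁅q.2, v⁆ ≠ 0 := by
      intro h
      rw [h, lie_zero] at hEjp
      exact hWv hEjp.symm
    have hv0 : v ≠ 0 := by
      intro h
      rw [h, lie_zero] at hEl
      exact hEl rfl
    -- degree bookkeeping
    set δ := γ + csum t with hδ
    have hsumδ : q.1 + (p.1 + δ) = 0 := by
      have hh := hsum0
      simp only [csum_append, csum_cons, csum_nil] at hh
      rw [hδ, ← hh]
      abel
    have hElmem : ⁅p.2, v⁆ ∈ D.G (p.1 + δ) := D.bracket_mem _ _ _ _ hp2 hvmem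
    have hEjmem : ⁅q.2, v⁆ ∈ D.G (q.1 + δ) := D.bracket_mem _ _ _ _ hq2 hvmem
    have hWmem : ⁅q.2, ⁅p.2, v⁆⁆ ∈ D.G 0 := by
      have hm := D.bracket_mem _ _ _ _ hq2 hElmem
      rwa [hsumδ] at hm
    obtain ⟨κ, hκ⟩ := line_lemma (hrk 0) hL0 hWmem hL0ne
    have hκ0 : κ ≠ 0 := by rintro rfl; rw [zero_smul] at hκ; exact hWv hκ
    -- weights of the two final steps
    obtain ⟨sp, hsp, hsp1⟩ := hstep t p [q] (by simp)
    obtain ⟨sq, hsq, hsq1⟩ := hstep (t ++ [p]) q [] (by simp)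
    -- l-values of the relevant degrees
    have hlpδ : l (p.1 + δ) = ((-sq : ℤ) : ℂ) := by
      have hadd := l_add L0 l hl hq2 hElmem hWv
      rw [hsumδ, hl00, hsq] at hadd
      push_cast at hadd ⊢
      linear_combination -hadd
    have hlδ : l δ = ((-sp - sq : ℤ) : ℂ) := by
      have hadd := l_add L0 l hl hp2 hvmem hEl
      rw [hlpδ, hsp] at hadd
      push_cast at hadd ⊢
      linear_combination -hadd
    have hlqδ : l (q.1 + δ) = ((-sp : ℤ) : ℂ) := by
      have hadd := l_add L0 l hl hq2 hvmem hEj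
      rw [hsq, hlδ] at hadd
      push_cast at hadd ⊢
      linear_combination hadd
    -- the two pairings
    have hpair1 : ⁅⁅q.2, v⁆, p.2⁆ = (-κ) • L0 := by
      rw [← lie_skew, hEjp, hκ, neg_smul]
    have hpair2 : ⁅⁅p.2, v⁆, q.2⁆ = (-κ) • L0 := by
      rw [← lie_skew, hκ, neg_smul]
    -- membership rewrites for the string lemma
    have hfp : p.2 ∈ D.G (-(q.1 + δ)) := by
      have he1 : (q.1 + δ) + p.1 = 0 := by rw [← hsumδ]; abel
      rw [(eq_neg_of_add_eq_zero_right he1).symm]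
      exact hp2
    have hfq : q.2 ∈ D.G (-(p.1 + δ)) := by
      have he1 : (p.1 + δ) + q.1 = 0 := by rw [← hsumδ]; abel
      rw [(eq_neg_of_add_eq_zero_right he1).symm]
      exact hq2
    -- the two string computations
    obtain ⟨S₁, hS₁, hstr₁⟩ := string_lemma L0 l N hrk hl htype hN (m := -sp)
      (M := -sp - sq) hEjmem hfp (by omega) hlqδ hpair1 hvmem hv0 (by omega) hlδ
    obtain ⟨S₂, hS₂, hstr₂⟩ := string_lemma L0 l N hrk hl htype hN (m := -sq)
      (M := -sp - sq) hElmem hfq (by omega) hlpδ hpair2 hvmem hv0 (by omega) hlδ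
    have hskew : ⁅⁅q.2, v⁆, ⁅p.2, v⁆⁆ = -⁅⁅p.2, v⁆, ⁅q.2, v⁆⁆ := (lie_skew _ _).symm
    rw [hstr₁, hstr₂, ← neg_smul] at hskew
    have hcoefeq := smul_cancel_of_ne_zero hv0 hskew
    have hSS : ((S₁ + S₂ : ℤ) : ℂ) = 0 := by
      have hκcan : κ * (((S₁ : ℤ) : ℂ) + ((S₂ : ℤ) : ℂ)) = 0 := by
        linear_combination -hcoefeq
      rcases mul_eq_zero.mp hκcan with h | h
      · exact absurd h hκ0
      · push_cast
        linear_combination h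
    have hSZ : S₁ + S₂ = 0 := by exact_mod_cast hSS
    omega

end LieOnLattice
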